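/- Let P be an L-convex polyomino and P_0, P_1, ..., P_t its derived sequence (repeatedly deleting the unique maximal rectangle of full width). Then the bounding box of P_k is a square for all 0 ≤ k ≤ t if and only if the distinct row lengths g_1 < ... < g_r of P with multiplicities a_1,...,a_r satisfy g_ℓ = a_1 + ... + a_ℓ for all ℓ. -/

import Mathlib

/-- Two cells of `ℤ × ℤ` are adjacent if they share an edge. -/
def CellAdj (a b : ℤ × ℤ) : Prop :=
  (a.1 = b.1 ∧ (a.2 = b.2 + 1 ∨ b.2 = a.2 + 1)) ∨
  (a.2 = b.2 ∧ (a.1 = b.1 + 1 ∨ b.1 = a.1 + 1))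

/-- `P` is an L-convex polyomino: it is row convex, column convex, and any two of
its cells are joined by a path of distinct cells of `P` with at most one change of
direction. Cells are recorded as `(row, column)`. -/
def IsLConvex (P : Finset (ℤ × ℤ)) : Prop :=
  (∀ i j j' j'' : ℤ, (i, j) ∈ P → (i, j'') ∈ P → j ≤ j' → j' ≤ j'' → (i, j') ∈ P) ∧
  (∀ i i' i'' j : ℤ, (i, j) ∈ P → (i'', j) ∈ P → i ≤ i' → i' ≤ i'' → (i', j) ∈ P) ∧
  (∀ a ∈ P, ∀ b ∈ P, ∃ (k : ℕ) (c : ℕ → ℤ × ℤ),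
    c 0 = a ∧ c k = b ∧ (∀ i ≤ k, c i ∈ P) ∧
    (∀ i < k, CellAdj (c i) (c (i + 1))) ∧
    (∀ i j, i ≤ k → j ≤ k → c i = c j → i = j) ∧
    ((Finset.Ioo 0 k).filter (fun i =>
      (c (i - 1)).1 ≠ (c (i + 1)).1 ∧ (c (i - 1)).2 ≠ (c (i + 1)).2)).card ≤ 1)

/-- Number of cells of `P` in row `i`. -/
def rowCount (P : Finset (ℤ × ℤ)) (i : ℤ) : ℕ := (P.filter (fun c => c.1 = i)).card

/-- Number of cells of `P` in column `j`. -/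
def colCount (P : Finset (ℤ × ℤ)) (j : ℤ) : ℕ := (P.filter (fun c => c.2 = j)).card

/-- The multiset of row lengths of `P` (one entry per occupied row). -/
def rowMultiset (P : Finset (ℤ × ℤ)) : Multiset ℕ :=
  (P.image Prod.fst).val.map (rowCount P)

/-- The multiset of column lengths of `P` (one entry per occupied column). -/
def colMultiset (P : Finset (ℤ × ℤ)) : Multiset ℕ :=
  (P.image Prod.snd).val.map (colCount P)

/-- The Ferrer diagram (as a set of cells in `ℤ × ℤ`) with `n` left-justified
rows, row `i` (0-based) having `h i` cells. -/
def ferrerCellsZ (n : ℕ) (h : ℕ → ℕ) : Finset (ℤ × ℤ) :=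
  (Finset.range n).biUnion
    (fun i => (Finset.range (h i)).image (fun (j : ℕ) => ((i : ℤ), (j : ℤ))))

/-- `Q` is obtained from `P` by deleting the (unique) maximal rectangle of full
width: rows `s, …, s+d-1` of `P` are exactly the full-width rows (containing a cell
in every occupied column of `P`), all other rows are strictly shorter, and `Q`
consists of the rows below row `s` together with the rows from `s+d` on, shifted
down by `d` to close the gap. -/
def DerivedStep (P Q : Finset (ℤ × ℤ)) : Prop :=
  ∃ (s : ℤ) (d : ℕ), 0 < d ∧
    (∀ i : ℤ, s ≤ i → i < s + d → rowCount P i = (P.image Prod.snd).card) ∧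
    (∀ i : ℤ, i < s ∨ s + d ≤ i → rowCount P i < (P.image Prod.snd).card) ∧
    Q = (P.filter (fun c => c.1 < s)) ∪
        ((P.filter (fun c => s + d ≤ c.1)).image (fun c => (c.1 - d, c.2)))

set_option maxHeartbeats 1000000

lemma rowCount_le_ncols (P : Finset (ℤ × ℤ)) (i : ℤ) :
    rowCount P i ≤ (P.image Prod.snd).card := by
  apply Finset.card_le_card_of_injOn (fun c => c.2)
  · intro c hc
    simp only [Finset.coe_filter, Set.mem_setOf_eq, Finset.mem_coe, Finset.mem_filter] at hc
    exact Finset.mem_image_of_mem _ hc.1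
  · intro c hc c' hc' h
    simp only [Finset.coe_filter, Set.mem_setOf_eq] at hc hc'
    exact Prod.ext (hc.2.trans hc'.2.symm) h

lemma mem_image_fst_iff (P : Finset (ℤ × ℤ)) (i : ℤ) :
    i ∈ P.image Prod.fst ↔ 0 < rowCount P i := by
  rw [rowCount, Finset.card_pos, Finset.filter_nonempty_iff]
  simp [Finset.mem_image, eq_comm]

lemma derived_nonempty {P Q : Finset (ℤ × ℤ)} (h : DerivedStep P Q) : P.Nonempty := by
  obtain ⟨s, d, hd, hfull, hless, hQ⟩ := h
  by_contra hc
  rw [Finset.not_nonempty_iff_eq_empty] at hc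
  have := hless (s - 1) (Or.inl (by omega))
  subst hc
  simp [rowCount] at this

lemma derived_max {P Q : Finset (ℤ × ℤ)} (h : DerivedStep P Q) :
    (P.image Prod.snd).card ∈ rowMultiset P ∧
    ∀ x ∈ rowMultiset P, x ≤ (P.image Prod.snd).card := by
  obtain ⟨s, d, hd, hfull, hless, hQ⟩ := h
  have hPne : P.Nonempty := derived_nonempty ⟨s, d, hd, hfull, hless, hQ⟩
  have hm : 0 < (P.image Prod.snd).card :=
    Finset.card_pos.2 (hPne.image _)
  constructor
  · have hs : s ∈ P.image Prod.fst := by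
      rw [mem_image_fst_iff, hfull s le_rfl (by omega)]; exact hm
    have : rowCount P s ∈ rowMultiset P :=
      Multiset.mem_map_of_mem _ hs
    rwa [hfull s le_rfl (by omega)] at this
  · intro x hx
    obtain ⟨i, _, rfl⟩ := Multiset.mem_map.1 hx
    exact rowCount_le_ncols P i

lemma derived_rowMultiset {P Q : Finset (ℤ × ℤ)} (h : DerivedStep P Q) :
    rowMultiset Q = (rowMultiset P).filter (fun x => x ≠ (P.image Prod.snd).card) := by
  obtain ⟨s, d, hd, hfull, hless, hQ⟩ := h
  have hPne : P.Nonempty := derived_nonempty ⟨s, d, hd, hfull, hless, hQ⟩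
  have hm : 0 < (P.image Prod.snd).card := Finset.card_pos.2 (hPne.image _)
  set m := (P.image Prod.snd).card with hmdef
  set R := P.image Prod.fst with hRdef
  set F := R.filter (fun i => rowCount P i ≠ m) with hFdef
  set ψ : ℤ → ℤ := fun i => if i < s then i else i - d with hψdef
  -- characterize F
  have hFmem : ∀ i, i ∈ F ↔ i ∈ R ∧ (i < s ∨ s + d ≤ i) := by
    intro i
    rw [hFdef, Finset.mem_filter]
    constructor
    · rintro ⟨hiR, hine⟩
      refine ⟨hiR, ?_⟩
      by_contra hc
      push_neg at hc
      exact hine (hfull i (by omega) (by omega))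
    · rintro ⟨hiR, hor⟩
      exact ⟨hiR, ne_of_lt (hless i hor)⟩
  -- rowCount of Q
  have hrcLow : ∀ i : ℤ, i < s → rowCount Q i = rowCount P i := by
    intro i hi
    unfold rowCount
    congr 1
    ext c
    simp only [hQ, Finset.mem_filter, Finset.mem_union, Finset.mem_image]
    constructor
    · rintro ⟨h1 | h2, hc⟩
      · exact ⟨h1.1, hc⟩
      · obtain ⟨c', ⟨hc'P, hc's⟩, rfl⟩ := h2
        simp only at hc
        omega
    · rintro ⟨hcP, hc⟩
      exact ⟨Or.inl ⟨hcP, by omega⟩, hc⟩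
  have hrcHigh : ∀ i : ℤ, s + d ≤ i → rowCount Q (i - d) = rowCount P i := by
    intro i hi
    have hkey : Q.filter (fun c => c.1 = i - d) =
        (P.filter (fun c => c.1 = i)).image (fun c => (c.1 - (d:ℤ), c.2)) := by
      ext c
      simp only [hQ, Finset.mem_filter, Finset.mem_union, Finset.mem_image]
      constructor
      · rintro ⟨h1 | h2, hc⟩
        · omega
        · obtain ⟨c', ⟨hc'P, hc's⟩, rfl⟩ := h2
          simp only at hc ⊢
          exact ⟨c', ⟨hc'P, by omega⟩, rfl⟩
      · rintro ⟨c', ⟨hc'P, hc'i⟩, rfl⟩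
        exact ⟨Or.inr ⟨c', ⟨hc'P, by omega⟩, rfl⟩, show c'.1 - (d:ℤ) = i - d by omega⟩
    unfold rowCount
    rw [hkey, Finset.card_image_of_injOn]
    intro u _ v _ huv
    simp only [Prod.ext_iff] at huv ⊢
    exact ⟨by omega, huv.2⟩
  have hrcF : ∀ i ∈ F, rowCount Q (ψ i) = rowCount P i := by
    intro i hi
    rcases (hFmem i).1 hi with ⟨_, hi' | hi'⟩
    · rw [hψdef]; simp only [if_pos hi']; exact hrcLow i hi'
    · rw [hψdef]; simp only [if_neg (by omega : ¬ i < s)]; exact hrcHigh i hi'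
  -- image of rows
  have himg : Q.image Prod.fst = F.image ψ := by
    ext j
    simp only [Finset.mem_image]
    constructor
    · rintro ⟨c, hc, rfl⟩
      simp only [hQ, Finset.mem_union, Finset.mem_filter, Finset.mem_image] at hc
      rcases hc with ⟨hcP, hcs⟩ | ⟨c', ⟨hc'P, hc's⟩, rfl⟩
      · refine ⟨c.1, (hFmem _).2 ⟨Finset.mem_image_of_mem _ hcP, Or.inl hcs⟩, ?_⟩
        rw [hψdef]; simp [hcs]
      · refine ⟨c'.1, (hFmem _).2 ⟨Finset.mem_image_of_mem _ hc'P, Or.inr hc's⟩, ?_⟩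
        rw [hψdef]; simp only [if_neg (by omega : ¬ c'.1 < s)]
    · rintro ⟨i, hiF, rfl⟩
      rcases (hFmem i).1 hiF with ⟨hiR, hi' | hi'⟩
      · obtain ⟨c, hcP, rfl⟩ := Finset.mem_image.1 hiR
        refine ⟨c, ?_, by rw [hψdef]; simp [hi']⟩
        simp only [hQ, Finset.mem_union, Finset.mem_filter]
        exact Or.inl ⟨hcP, hi'⟩
      · obtain ⟨c, hcP, rfl⟩ := Finset.mem_image.1 hiR
        refine ⟨(c.1 - d, c.2), ?_, by rw [hψdef]; simp only [if_neg (by omega : ¬ c.1 < s)]⟩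
        simp only [hQ, Finset.mem_union, Finset.mem_filter, Finset.mem_image]
        exact Or.inr ⟨c, ⟨hcP, hi'⟩, rfl⟩
  have hinj : Set.InjOn ψ F := by
    intro u hu v hv huv
    rcases (hFmem u).1 (hu) with ⟨_, hu'⟩
    rcases (hFmem v).1 (hv) with ⟨_, hv'⟩
    simp only [hψdef] at huv
    split_ifs at huv <;> omega
  -- conclude
  rw [rowMultiset, himg, Finset.image_val_of_injOn hinj, Multiset.map_map]
  rw [rowMultiset, Multiset.filter_map]
  have : F.val = (Multiset.filter ((fun x => x ≠ m) ∘ rowCount P) R.val) := by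
    rw [hFdef, Finset.filter_val]
    rfl
  rw [← this]
  apply Multiset.map_congr rfl
  intro i hi
  exact hrcF i hi


/-- Let `P` be an L-convex polyomino with derived sequence `Ps 0 = P, …, Ps t`,
and distinct row lengths `g 0 < … < g (r-1)` with multiplicities `a i`. Then the
bounding box of every `Ps k` (`k ≤ t`) is a square (its number of occupied rows
equals its number of occupied columns) if and only if `g ℓ = a 0 + … + a ℓ` for
all `ℓ`. -/
theorem stmt15 (P : Finset (ℤ × ℤ)) (hne : P.Nonempty) (hP : IsLConvex P)
    (Ps : ℕ → Finset (ℤ × ℤ)) (t : ℕ) (hP0 : Ps 0 = P)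
    (hPstep : ∀ k, k < t → DerivedStep (Ps k) (Ps (k + 1)))
    (hPend : DerivedStep (Ps t) ∅)
    (r : ℕ) (g a : Fin r → ℕ) (hg : StrictMono g)
    (hgmem : ∀ x : ℕ, x ∈ rowMultiset P ↔ ∃ ℓ, x = g ℓ)
    (ha : ∀ ℓ, a ℓ = (rowMultiset P).count (g ℓ)) :
    (∀ k, k ≤ t → ((Ps k).image Prod.fst).card = ((Ps k).image Prod.snd).card) ↔
    (∀ ℓ : Fin r, g ℓ = ∑ i ∈ Finset.univ.filter (fun i => i ≤ ℓ), a i) := by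
  classical
  have hgmem' : ∀ ℓ : Fin r, g ℓ ∈ rowMultiset P := fun ℓ => (hgmem _).2 ⟨ℓ, rfl⟩
  have hr1 : 0 < r := by
    obtain ⟨c, hc⟩ := hne
    have hx : rowCount P c.1 ∈ rowMultiset P :=
      Multiset.mem_map_of_mem _ (Finset.mem_image_of_mem _ hc)
    obtain ⟨ℓ, -⟩ := (hgmem _).1 hx
    exact ℓ.pos
  have hmaxk : ∀ k ≤ t, ((Ps k).image Prod.snd).card ∈ rowMultiset (Ps k) ∧
      ∀ x ∈ rowMultiset (Ps k), x ≤ ((Ps k).image Prod.snd).card := by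
    intro k hk
    rcases hk.lt_or_eq with h | h
    · exact derived_max (hPstep k h)
    · subst h; exact derived_max hPend
  -- the key induction
  have key : ∀ k, k ≤ t → ∃ j : Fin r, (j : ℕ) + k = r - 1 ∧
      ((Ps k).image Prod.snd).card = g j ∧
      rowMultiset (Ps k) = (rowMultiset P).filter (fun x => x ≤ g j) := by
    intro k
    induction k with
    | zero =>
      intro hk
      obtain ⟨hmem, hle⟩ := hmaxk 0 hk
      rw [hP0] at hmem hle
      obtain ⟨ℓ, hℓ⟩ := (hgmem _).1 hmem
      have h2 : ℓ = ⟨r - 1, Nat.sub_lt hr1 Nat.one_pos⟩ := by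
        have h1 : g ⟨r - 1, Nat.sub_lt hr1 Nat.one_pos⟩ ≤ g ℓ := by
          rw [← hℓ]; exact hle _ (hgmem' _)
        have h3 : r - 1 ≤ (ℓ : ℕ) := Fin.le_def.1 (hg.le_iff_le.1 h1)
        have hlt := ℓ.isLt
        exact Fin.ext (by simp only [Fin.val_mk]; omega)
      refine ⟨⟨r - 1, Nat.sub_lt hr1 Nat.one_pos⟩, by simp, ?_, ?_⟩
      · rw [hP0, hℓ]; exact congrArg g h2
      · rw [hP0, eq_comm, Multiset.filter_eq_self]
        intro x hx
        rw [← h2, ← hℓ]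
        exact hle x hx
    | succ k ih =>
      intro hk1
      have hkt : k < t := by omega
      obtain ⟨j, hjk, hmj, hMk⟩ := ih (by omega)
      have hstep : rowMultiset (Ps (k+1)) =
          (rowMultiset P).filter (fun x => x ≠ g j ∧ x ≤ g j) := by
        rw [derived_rowMultiset (hPstep k hkt), hmj, hMk, Multiset.filter_filter]
      have hmem1 := (hmaxk (k+1) hk1).1
      have hle1 := (hmaxk (k+1) hk1).2
      -- j ≥ 1
      have hj1 : 1 ≤ (j : ℕ) := by
        by_contra hc
        rw [hstep, Multiset.mem_filter] at hmem1
        obtain ⟨hmemP, hne', hle'⟩ := hmem1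
        obtain ⟨ℓ, hℓ⟩ := (hgmem _).1 hmemP
        rw [hℓ] at hle' hne'
        have h4 : (ℓ : ℕ) ≤ (j : ℕ) := Fin.le_def.1 (hg.le_iff_le.1 hle')
        exact hne' (by congr 1; exact Fin.ext (by omega))
      set j' : Fin r := ⟨(j : ℕ) - 1, Nat.lt_of_le_of_lt (Nat.sub_le _ _) j.isLt⟩ with hj'def
      have hj'v : (j' : ℕ) = (j : ℕ) - 1 := rfl
      have hfilt : rowMultiset (Ps (k+1)) = (rowMultiset P).filter (fun x => x ≤ g j') := by
        rw [hstep]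
        apply Multiset.filter_congr
        intro x hx
        obtain ⟨ℓ, rfl⟩ := (hgmem _).1 hx
        constructor
        · rintro ⟨h2, h1⟩
          apply hg.le_iff_le.2
          have hlt : (ℓ : ℕ) < (j : ℕ) := by
            rcases lt_or_eq_of_le (Fin.le_def.1 (hg.le_iff_le.1 h1)) with h | h
            · exact h
            · exact absurd (congrArg g (Fin.ext h)) h2
          rw [Fin.le_def, hj'v]; omega
        · intro h1
          have h5 : (ℓ : ℕ) ≤ (j : ℕ) - 1 := by
            have := hg.le_iff_le.1 h1; rwa [Fin.le_def, hj'v] at this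
          constructor
          · intro hc
            have h6 : (ℓ : ℕ) = (j : ℕ) := congrArg Fin.val (hg.injective hc)
            omega
          · exact hg.le_iff_le.2 (by rw [Fin.le_def]; omega)
      refine ⟨j', by rw [hj'v]; omega, ?_, hfilt⟩
      rw [hfilt] at hmem1 hle1
      rw [Multiset.mem_filter] at hmem1
      obtain ⟨hmemP, hle'⟩ := hmem1
      have hgj'mem : g j' ∈ (rowMultiset P).filter (fun x => x ≤ g j') :=
        Multiset.mem_filter.2 ⟨hgmem' j', le_rfl⟩
      exact le_antisymm hle' (hle1 _ hgj'mem)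
  -- conclusion at k = t : r = t + 1
  obtain ⟨jt, hjt, hmjt, hMt⟩ := key t le_rfl
  have hjt0 : (jt : ℕ) = 0 := by
    by_contra hc
    have hend := derived_rowMultiset hPend
    have h0 : rowMultiset (∅ : Finset (ℤ × ℤ)) = 0 := by simp [rowMultiset]
    rw [h0, hmjt, hMt, Multiset.filter_filter] at hend
    have hmem0 : g ⟨0, hr1⟩ ∈ Multiset.filter
        (fun x => x ≠ g jt ∧ x ≤ g jt) (rowMultiset P) := by
      refine Multiset.mem_filter.2 ⟨hgmem' _, ?_, ?_⟩
      · intro h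
        have h7 : (0 : ℕ) = (jt : ℕ) := congrArg Fin.val (hg.injective h)
        omega
      · exact hg.le_iff_le.2 (by rw [Fin.le_def]; exact Nat.zero_le _)
    rw [← hend] at hmem0
    exact absurd hmem0 (Multiset.notMem_zero _)
  have hrt : r = t + 1 := by omega
  -- card of filtered multiset
  have hcard : ∀ j : Fin r, Multiset.card ((rowMultiset P).filter (fun x => x ≤ g j)) =
      ∑ i ∈ Finset.univ.filter (fun i => i ≤ j), a i := by
    intro j
    rw [← Multiset.toFinset_sum_count_eq, Multiset.toFinset_filter]
    refine (Finset.sum_bij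
      (fun (ℓ : Fin r) (_ : ℓ ∈ Finset.univ.filter (fun i => i ≤ j)) => g ℓ)
      ?_ ?_ ?_ ?_).symm
    · intro ℓ hℓ
      rw [Finset.mem_filter] at hℓ ⊢
      exact ⟨Multiset.mem_toFinset.2 (hgmem' ℓ), hg.monotone hℓ.2⟩
    · intro u _ v _ h; exact hg.injective h
    · intro x hx
      rw [Finset.mem_filter, Multiset.mem_toFinset] at hx
      obtain ⟨ℓ, rfl⟩ := (hgmem _).1 hx.1
      exact ⟨ℓ, Finset.mem_filter.2 ⟨Finset.mem_univ _, hg.le_iff_le.1 hx.2⟩, rfl⟩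
    · intro ℓ hℓ
      rw [Finset.mem_filter] at hℓ
      rw [ha, Multiset.count_filter, if_pos (hg.monotone hℓ.2)]
  -- number of rows
  have hrows : ∀ k, ((Ps k).image Prod.fst).card = Multiset.card (rowMultiset (Ps k)) := by
    intro k; rw [rowMultiset, Multiset.card_map]; rfl
  constructor
  · intro h ℓ
    have hℓt : (ℓ : ℕ) ≤ t := by have := ℓ.isLt; omega
    obtain ⟨j, hjk, hmj, hMk⟩ := key (t - (ℓ : ℕ)) (by omega)
    have hjℓ : j = ℓ := Fin.ext (by have := ℓ.isLt; omega)
    subst hjℓ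
    have heq := h (t - (j : ℕ)) (by omega)
    rw [hrows, hMk, hcard, hmj] at heq
    exact heq.symm
  · intro h k hk
    obtain ⟨j, hjk, hmj, hMk⟩ := key k hk
    rw [hrows, hMk, hcard, hmj, ← h j]
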